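/- (Chow–Liu tree construction, key lemma in the proof of Theorem 2.1) Suppose the edge set E forms a tree on Fin n. Let μ_i be univariate pmfs on C i with μ_i(x) > 0 for every i ∈ Fin n and x ∈ C i, and let θ_{ij} be bivariate pmfs on C i × C j for (i,j) ∈ E satisfying Σ_{y ∈ C j} θ_{ij}(x,y) = μ_i(x) for all x ∈ C i and Σ_{x ∈ C i} θ_{ij}(x,y) = μ_j(y) for all y ∈ C j. Then the function θ defined on Π i, C i by θ(c) = (Π_{i ∈ Fin n} μ_i(c i)) * Π_{(i,j) ∈ E} θ_{ij}(c i, c j) / (μ_i(c i) * μ_j(c j)) is a joint distribution (nonnegative and summing to 1) satisfying proj_i θ = μ_i for every i ∈ Fin n and proj_{ij} θ = θ_{ij} for every (i,j) ∈ E. -/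

import Mathlib

open Finset

noncomputable section

abbrev Pt {n : ℕ} (C : Fin n → Finset ℝ) := (i : Fin n) → {x : ℝ // x ∈ C i}

def IsJoint {n : ℕ} {C : Fin n → Finset ℝ} (θ : Pt C → ℝ) : Prop :=
  (∀ c, 0 ≤ θ c) ∧ ∑ c : Pt C, θ c = 1

def projUni {n : ℕ} {C : Fin n → Finset ℝ} (θ : Pt C → ℝ) (i : Fin n)
    (x : {x : ℝ // x ∈ C i}) : ℝ :=
  ∑ c : Pt C, if c i = x then θ c else 0

def projBi {n : ℕ} {C : Fin n → Finset ℝ} (θ : Pt C → ℝ) (i j : Fin n)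
    (p : {x : ℝ // x ∈ C i} × {y : ℝ // y ∈ C j}) : ℝ :=
  ∑ c : Pt C, if c i = p.1 ∧ c j = p.2 then θ c else 0

def IsPmf {S : Type*} [Fintype S] (p : S → ℝ) : Prop :=
  (∀ s, 0 ≤ p s) ∧ ∑ s, p s = 1

def KL {S : Type*} [Fintype S] (p q : S → ℝ) : ℝ :=
  ∑ s, if 0 < p s then p s * Real.log (p s / q s) else 0

def Vanishes {S : Type*} (p q : S → ℝ) : Prop := ∀ s, q s = 0 → p s = 0

def treeGraph {n : ℕ} (E : Finset (Fin n × Fin n)) : SimpleGraph (Fin n) :=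
  SimpleGraph.fromRel (fun i j => (i, j) ∈ E)

def IsTreeEdges {n : ℕ} (E : Finset (Fin n × Fin n)) : Prop :=
  (∀ e ∈ E, e.1 < e.2) ∧ (treeGraph E).IsTree

def psi {n : ℕ} {C : Fin n → Finset ℝ} {K : ℕ} (a : Fin K → Fin n → ℝ) (b : Fin K → ℝ)
    (c : Pt C) : ℝ :=
  ⨆ k : Fin K, (∑ i, a k i * (c i : ℝ) + b k)

def InTheta {n : ℕ} {C : Fin n → Finset ℝ} (E : Finset (Fin n × Fin n))
    (μU : (i : Fin n) → {x : ℝ // x ∈ C i} → ℝ)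
    (μB : (i j : Fin n) → ({x : ℝ // x ∈ C i} × {y : ℝ // y ∈ C j}) → ℝ)
    (ρ : ℝ) (θ : Pt C → ℝ) : Prop :=
  IsJoint θ ∧ (∀ i, projUni θ i = μU i) ∧
  ∀ i j, (i, j) ∈ E →
    Vanishes (projBi θ i j) (μB i j) ∧ KL (projBi θ i j) (μB i j) ≤ ρ

namespace CLaux

open SimpleGraph Walk

variable {n : ℕ}

lemma treeGraph_adj {F : Finset (Fin n × Fin n)} {a b : Fin n} :
    (treeGraph F).Adj a b ↔ a ≠ b ∧ ((a, b) ∈ F ∨ (b, a) ∈ F) := by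
  simp [treeGraph, SimpleGraph.fromRel_adj]

lemma acyclic_anti {F F' : Finset (Fin n × Fin n)} (h : F ⊆ F')
    (hac : (treeGraph F').IsAcyclic) : (treeGraph F).IsAcyclic := by
  have hle : treeGraph F ≤ treeGraph F' := by
    intro a b hab
    rw [treeGraph_adj] at hab ⊢
    exact ⟨hab.1, hab.2.imp (h ·) (h ·)⟩
  intro v c hc
  exact hac (c.mapLe hle) (hc.mapLe hle)

lemma exists_max_path (G : SimpleGraph (Fin n)) {a b : Fin n} (hab : G.Adj a b) :
    ∃ (u v : Fin n) (p : G.Walk u v), p.IsPath ∧ 1 ≤ p.length ∧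
      ∀ (x y : Fin n) (q : G.Walk x y), q.IsPath → q.length ≤ p.length := by
  classical
  set S : Set ℕ := {L | ∃ (x y : Fin n) (q : G.Walk x y), q.IsPath ∧ q.length = L} with hS
  have hne : 1 ∈ S := ⟨a, b, .cons hab .nil, by simp [hab.ne], rfl⟩
  have hbdd : BddAbove S := by
    refine ⟨n, fun L hL => ?_⟩
    obtain ⟨x, y, q, hq, rfl⟩ := hL
    have := hq.length_lt
    simpa using this.le
  have hmem := Nat.sSup_mem ⟨1, hne⟩ hbdd
  obtain ⟨u, v, p, hp, hlen⟩ := hmem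
  refine ⟨u, v, p, hp, ?_, fun x y q hq => ?_⟩
  · rw [hlen]; exact le_csSup hbdd hne
  · rw [hlen]; exact le_csSup hbdd ⟨x, y, q, hq, rfl⟩

lemma maxpath_endpoint {G : SimpleGraph (Fin n)} (hG : G.IsAcyclic)
    {u v : Fin n} {p : G.Walk u v} (hp : p.IsPath)
    (hmax : ∀ (x y : Fin n) (q : G.Walk x y), q.IsPath → q.length ≤ p.length)
    {w : Fin n} (hadj : G.Adj u w) : w = p.getVert 1 := by
  cases p with
  | nil =>
    have := hmax u w (.cons hadj .nil) (by simp [hadj.ne])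
    simp at this
  | cons h q =>
    rename_i x
    have hx : (Walk.cons h q).getVert 1 = x := by
      simp [Walk.getVert_cons_succ]
    rw [hx]
    rw [Walk.cons_isPath_iff] at hp
    by_cases hwx : w = x
    · exact hwx
    by_cases hws : w ∈ (Walk.cons h q).support
    · exfalso
      set p' : G.Walk u v := Walk.cons h q with hp'
      have hws' : w ∈ p'.support := hws
      have hpath : (p'.takeUntil w hws').IsPath :=
        ((Walk.cons_isPath_iff h q).2 hp).takeUntil hws'
      have hedge : s(w, u) ∉ (p'.takeUntil w hws').edges := by
        intro hmem
        have hmem' : s(w, u) ∈ p'.edges := Walk.edges_takeUntil_subset _ _ hmem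
        rw [hp'] at hmem'
        simp only [Walk.edges_cons, List.mem_cons] at hmem'
        rcases hmem' with heq | hmem'
        · rw [Sym2.eq_iff] at heq
          rcases heq with ⟨h1, h2⟩ | ⟨h1, h2⟩
          · exact hadj.ne' h1
          · exact hwx h1
        · exact hp.2 (Walk.snd_mem_support_of_mem_edges q hmem')
      have hcyc := SimpleGraph.Path.cons_isCycle ⟨p'.takeUntil w hws', hpath⟩ hadj.symm hedge
      exact hG _ hcyc
    · have hext : (Walk.cons hadj.symm (Walk.cons h q)).IsPath :=
        (Walk.cons_isPath_iff _ _).2 ⟨(Walk.cons_isPath_iff h q).2 hp, hws⟩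
      have := hmax _ _ _ hext
      simp at this

lemma path_start_ne_end {G : SimpleGraph (Fin n)} {u v : Fin n} {p : G.Walk u v}
    (hp : p.IsPath) (hl : 1 ≤ p.length) : u ≠ v := by
  cases p with
  | nil => simp at hl
  | cons h q =>
    rw [Walk.cons_isPath_iff] at hp
    rintro rfl
    exact hp.2 q.end_mem_support

/-- from a max path, the start vertex has a unique neighbor. -/
lemma endpoint_unique_nbr {F : Finset (Fin n × Fin n)}
    (hac : (treeGraph F).IsAcyclic)
    {u v : Fin n} {p : (treeGraph F).Walk u v} (hp : p.IsPath)
    (hmax : ∀ (x y : Fin n) (q : (treeGraph F).Walk x y), q.IsPath → q.length ≤ p.length)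
    (hl : 1 ≤ p.length) :
    ∃ x, (treeGraph F).Adj u x ∧ ∀ w, (treeGraph F).Adj u w → w = x := by
  refine ⟨p.getVert 1, ?_, fun w hw => maxpath_endpoint hac hp hmax hw⟩
  have := p.adj_getVert_succ (i := 0) (by omega)
  simpa using this

/-- unique neighbor x at w turns into unique incident edge, given sortedness. -/
lemma unique_edge_of_unique_nbr {F : Finset (Fin n × Fin n)} (hs : ∀ e ∈ F, e.1 < e.2)
    {w x : Fin n} (hadj : (treeGraph F).Adj w x)
    (hnbr : ∀ y, (treeGraph F).Adj w y → y = x) :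
    ∃ e0, e0 ∈ F ∧ (e0.1 = w ∨ e0.2 = w) ∧ ∀ e ∈ F, (e.1 = w ∨ e.2 = w) → e = e0 := by
  have hkey : ∀ e ∈ F, (e.1 = w ∨ e.2 = w) → e = (w, x) ∨ e = (x, w) := by
    rintro ⟨a, b⟩ he (h | h)
    · simp only at h; subst h
      have : (treeGraph F).Adj a b := treeGraph_adj.2 ⟨(hs _ he).ne, Or.inl he⟩
      exact Or.inl (by rw [hnbr b this])
    · simp only at h; subst h
      have : (treeGraph F).Adj b a := treeGraph_adj.2 ⟨(hs _ he).ne', Or.inr he⟩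
      exact Or.inr (by rw [hnbr a this])
  rcases treeGraph_adj.1 hadj with ⟨hne, hF | hF⟩
  · refine ⟨(w, x), hF, Or.inl rfl, fun e he het => ?_⟩
    rcases hkey e he het with rfl | rfl
    · rfl
    · exact absurd (hs _ hF) (by have := hs _ he; simp only at this ⊢; omega)
  · refine ⟨(x, w), hF, Or.inr rfl, fun e he het => ?_⟩
    rcases hkey e he het with rfl | rfl
    · exact absurd (hs _ hF) (by have := hs _ he; simp only at this ⊢; omega)
    · rfl

lemma exists_leaf_avoid {F : Finset (Fin n × Fin n)} (hs : ∀ e ∈ F, e.1 < e.2)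
    (hac : (treeGraph F).IsAcyclic) (hne : F.Nonempty) (a : Fin n) :
    ∃ v e0, e0 ∈ F ∧ (e0.1 = v ∨ e0.2 = v) ∧ v ≠ a ∧
      ∀ e ∈ F, (e.1 = v ∨ e.2 = v) → e = e0 := by
  obtain ⟨f, hf⟩ := hne
  have hadjf : (treeGraph F).Adj f.1 f.2 := treeGraph_adj.2 ⟨(hs _ hf).ne, Or.inl (by simpa using hf)⟩
  obtain ⟨u, v, p, hp, hl, hmax⟩ := exists_max_path (treeGraph F) hadjf
  have huv : u ≠ v := path_start_ne_end hp hl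
  have hmax' : ∀ (x y : Fin n) (q : (treeGraph F).Walk x y), q.IsPath →
      q.length ≤ p.reverse.length := by
    intro x y q hq; rw [Walk.length_reverse]; exact hmax x y q hq
  have hub := endpoint_unique_nbr hac hp hmax hl
  have hvb := endpoint_unique_nbr hac hp.reverse hmax' (by rw [Walk.length_reverse]; exact hl)
  by_cases hua : u = a
  · obtain ⟨x, hadj, hnbr⟩ := hvb
    obtain ⟨e0, he0, het, huniq⟩ := unique_edge_of_unique_nbr hs hadj hnbr
    exact ⟨v, e0, he0, het, fun h => huv (hua.trans h.symm), huniq⟩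
  · obtain ⟨x, hadj, hnbr⟩ := hub
    obtain ⟨e0, he0, het, huniq⟩ := unique_edge_of_unique_nbr hs hadj hnbr
    exact ⟨u, e0, he0, het, hua, huniq⟩

lemma exists_leaf_avoid2 {F : Finset (Fin n × Fin n)} {i j : Fin n}
    (hs : ∀ e ∈ F, e.1 < e.2) (hij : i < j) (hnotin : (i, j) ∉ F)
    (hac : (treeGraph (insert (i, j) F)).IsAcyclic) (hne : F.Nonempty) :
    ∃ v e0, e0 ∈ F ∧ (e0.1 = v ∨ e0.2 = v) ∧ v ≠ i ∧ v ≠ j ∧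
      ∀ e ∈ F, (e.1 = v ∨ e.2 = v) → e = e0 := by
  set F0 := insert (i, j) F with hF0
  have hs0 : ∀ e ∈ F0, e.1 < e.2 := by
    intro e he
    rcases Finset.mem_insert.1 he with rfl | he
    · exact hij
    · exact hs e he
  have hFsub : F ⊆ F0 := Finset.subset_insert _ _
  -- helper to conclude at a vertex w not in {i,j} with unique neighbor
  have conclude : ∀ w x : Fin n, w ≠ i → w ≠ j → (treeGraph F0).Adj w x →
      (∀ y, (treeGraph F0).Adj w y → y = x) →
      ∃ v e0, e0 ∈ F ∧ (e0.1 = v ∨ e0.2 = v) ∧ v ≠ i ∧ v ≠ j ∧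
        ∀ e ∈ F, (e.1 = v ∨ e.2 = v) → e = e0 := by
    intro w x hwi hwj hadj hnbr
    obtain ⟨e0, he0, het, huniq⟩ := unique_edge_of_unique_nbr hs0 hadj hnbr
    have he0F : e0 ∈ F := by
      rcases Finset.mem_insert.1 he0 with heq | h
      · exfalso; rcases het with h | h <;> rw [heq] at h
        · exact hwi h.symm
        · exact hwj h.symm
      · exact h
    exact ⟨w, e0, he0F, het, hwi, hwj, fun e he het' => huniq e (hFsub he) het'⟩
  obtain ⟨f, hf⟩ := hne
  have hadjf : (treeGraph F0).Adj f.1 f.2 :=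
    treeGraph_adj.2 ⟨(hs _ hf).ne, Or.inl (by simpa using hFsub hf)⟩
  obtain ⟨u, v, p, hp, hl, hmax⟩ := exists_max_path (treeGraph F0) hadjf
  have huv : u ≠ v := path_start_ne_end hp hl
  have hmax' : ∀ (x y : Fin n) (q : (treeGraph F0).Walk x y), q.IsPath →
      q.length ≤ p.reverse.length := by
    intro x y q hq; rw [Walk.length_reverse]; exact hmax x y q hq
  by_cases hu : u ≠ i ∧ u ≠ j
  · obtain ⟨x, hadj, hnbr⟩ := endpoint_unique_nbr hac hp hmax hl
    exact conclude u x hu.1 hu.2 hadj hnbr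
  by_cases hv : v ≠ i ∧ v ≠ j
  · obtain ⟨x, hadj, hnbr⟩ := endpoint_unique_nbr hac hp.reverse hmax'
      (by rw [Walk.length_reverse]; exact hl)
    exact conclude v x hv.1 hv.2 hadj hnbr
  -- both endpoints in {i, j}; derive p.length = 1
  have hu' : u = i ∨ u = j := by
    by_cases h : u = i
    · exact Or.inl h
    · push_neg at hu; exact Or.inr (hu h)
  have hv' : v = i ∨ v = j := by
    by_cases h : v = i
    · exact Or.inl h
    · push_neg at hv; exact Or.inr (hv h)
  have hadj0 : (treeGraph F0).Adj i j :=
    treeGraph_adj.2 ⟨hij.ne, Or.inl (Finset.mem_insert_self _ _)⟩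
  have hadjuv : (treeGraph F0).Adj u v := by
    rcases hu' with rfl | rfl <;> rcases hv' with rfl | rfl
    · exact absurd rfl huv
    · exact hadj0
    · exact hadj0.symm
    · exact absurd rfl huv
  have hveq : v = p.getVert 1 := maxpath_endpoint hac hp hmax hadjuv
  have hL1 : p.length = 1 := by
    cases p with
    | nil => simp at hl
    | cons h q =>
      rename_i x
      have hxv : v = x := by simpa [Walk.getVert_cons_succ] using hveq
      cases q with
      | nil => simp
      | cons h' q' =>
        exfalso
        rw [Walk.cons_isPath_iff, Walk.cons_isPath_iff] at hp
        exact hp.1.2 (hxv ▸ q'.end_mem_support)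
  -- now use f itself as a maximal path
  have hpf : (Walk.cons hadjf Walk.nil).IsPath := by simp [hadjf.ne]
  have hmaxf : ∀ (x y : Fin n) (q : (treeGraph F0).Walk x y), q.IsPath →
      q.length ≤ (Walk.cons hadjf Walk.nil).length := by
    intro x y q hq
    have := hmax x y q hq
    simpa [hL1] using this
  have hnbrf : ∀ w, (treeGraph F0).Adj f.1 w → w = f.2 := by
    intro w hw
    have := maxpath_endpoint hac hpf hmaxf hw
    simpa using this
  have hf1i : f.1 ≠ i := by
    intro h
    have : j = f.2 := hnbrf j (by rw [h]; exact hadj0)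
    exact hnotin (by rw [← h, this]; exact hf)
  have hf1j : f.1 ≠ j := by
    intro h
    have : i = f.2 := hnbrf i (by rw [h]; exact hadj0.symm)
    have h2 := hs f hf
    rw [h, ← this] at h2
    exact absurd hij (asymm h2)
  exact conclude f.1 f.2 hf1i hf1j hadjf hnbrf

end CLaux

namespace CLaux
variable {n : ℕ} {C : Fin n → Finset ℝ}
  (μU : (i : Fin n) → {x : ℝ // x ∈ C i} → ℝ)
  (θB : (i j : Fin n) → ({x : ℝ // x ∈ C i} × {y : ℝ // y ∈ C j}) → ℝ)

def wt (e : Fin n × Fin n) (c : Pt C) : ℝ :=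
  θB e.1 e.2 (c e.1, c e.2) / (μU e.1 (c e.1) * μU e.2 (c e.2))

def GF (F : Finset (Fin n × Fin n)) (c : Pt C) : ℝ :=
  (∏ i, μU i (c i)) * ∏ e ∈ F, wt μU θB e c

lemma sum_prod_pi (f : (i : Fin n) → {x : ℝ // x ∈ C i} → ℝ) :
    ∑ c : Pt C, ∏ i, f i (c i) = ∏ i, ∑ x, f i x := by
  classical
  exact ((Finset.prod_univ_sum (fun _ => Finset.univ) f).trans
    (by rw [Fintype.piFinset_univ])).symm

lemma B1 (hμU : ∀ i, IsPmf (μU i)) (i : Fin n) (x : {x : ℝ // x ∈ C i}) :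
    ∑ c : Pt C, (if c i = x then ∏ k, μU k (c k) else 0) = μU i x := by
  classical
  have hrw : ∀ c : Pt C, (if c i = x then ∏ k, μU k (c k) else 0)
      = ∏ k, (if k = i ∧ ((c k : ℝ) ≠ (x : ℝ)) then 0 else μU k (c k)) := by
    intro c
    by_cases h : c i = x
    · rw [if_pos h]
      refine Finset.prod_congr rfl fun k _ => ?_
      rw [if_neg]
      rintro ⟨rfl, hne⟩
      exact hne (by rw [h])
    · rw [if_neg h]
      refine (Finset.prod_eq_zero (Finset.mem_univ i) ?_).symm
      rw [if_pos ⟨rfl, fun hh => h (Subtype.ext hh)⟩]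
  rw [Finset.sum_congr rfl fun c _ => hrw c,
    sum_prod_pi (fun k (t : {t : ℝ // t ∈ C k}) => if k = i ∧ ((t : ℝ) ≠ (x : ℝ)) then 0 else μU k t)]
  rw [Finset.prod_eq_single i ?h1 ?h2]
  · have h3 : ∀ y : {t : ℝ // t ∈ C i}, (if i = i ∧ ((y : ℝ) ≠ (x : ℝ)) then 0 else μU i y)
        = (if y = x then μU i y else 0) := by
      intro y
      by_cases h : y = x
      · subst h; simp
      · rw [if_pos ⟨rfl, fun hh => h (Subtype.ext hh)⟩, if_neg h]
    rw [Finset.sum_congr rfl fun y _ => h3 y, Finset.sum_ite_eq' Finset.univ x (fun y => μU i y)]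
    simp
  case h1 =>
    intro k _ hk
    have h4 : ∀ y : {t : ℝ // t ∈ C k}, (if k = i ∧ ((y : ℝ) ≠ (x : ℝ)) then 0 else μU k y) = μU k y :=
      fun y => if_neg (fun hc => hk hc.1)
    rw [Finset.sum_congr rfl fun y _ => h4 y]
    exact (hμU k).2
  case h2 =>
    intro h; exact absurd (Finset.mem_univ i) h

lemma B2 (hμU : ∀ i, IsPmf (μU i)) {i j : Fin n} (hij : i ≠ j)
    (x : {t : ℝ // t ∈ C i}) (y : {t : ℝ // t ∈ C j}) :
    ∑ c : Pt C, (if c i = x ∧ c j = y then ∏ k, μU k (c k) else 0) = μU i x * μU j y := by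
  classical
  have hrw : ∀ c : Pt C, (if c i = x ∧ c j = y then ∏ k, μU k (c k) else 0)
      = ∏ k, (if (k = i ∧ ((c k : ℝ) ≠ (x : ℝ))) ∨ (k = j ∧ ((c k : ℝ) ≠ (y : ℝ)))
          then 0 else μU k (c k)) := by
    intro c
    by_cases h : c i = x ∧ c j = y
    · rw [if_pos h]
      refine Finset.prod_congr rfl fun k _ => ?_
      rw [if_neg]
      rintro (⟨rfl, hne⟩ | ⟨rfl, hne⟩)
      · exact hne (by rw [h.1])
      · exact hne (by rw [h.2])
    · rw [if_neg h]
      rw [not_and_or] at h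
      rcases h with h | h
      · refine (Finset.prod_eq_zero (Finset.mem_univ i) ?_).symm
        rw [if_pos (Or.inl ⟨rfl, fun hh => h (Subtype.ext hh)⟩)]
      · refine (Finset.prod_eq_zero (Finset.mem_univ j) ?_).symm
        rw [if_pos (Or.inr ⟨rfl, fun hh => h (Subtype.ext hh)⟩)]
  rw [Finset.sum_congr rfl fun c _ => hrw c,
    sum_prod_pi (fun k (t : {t : ℝ // t ∈ C k}) => if (k = i ∧ ((t : ℝ) ≠ (x : ℝ))) ∨ (k = j ∧ ((t : ℝ) ≠ (y : ℝ))) then 0 else μU k t)]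
  have hji : j ∈ Finset.univ.erase i := Finset.mem_erase.2 ⟨Ne.symm hij, Finset.mem_univ j⟩
  rw [← Finset.mul_prod_erase Finset.univ _ (Finset.mem_univ i),
      ← Finset.mul_prod_erase (Finset.univ.erase i) _ hji]
  have hSi : (∑ t : {t : ℝ // t ∈ C i}, if (i = i ∧ ((t : ℝ) ≠ (x : ℝ))) ∨ (i = j ∧ ((t : ℝ) ≠ (y : ℝ)))
      then 0 else μU i t) = μU i x := by
    have h3 : ∀ t : {t : ℝ // t ∈ C i}, (if (i = i ∧ ((t : ℝ) ≠ (x : ℝ))) ∨ (i = j ∧ ((t : ℝ) ≠ (y : ℝ)))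
        then 0 else μU i t) = (if t = x then μU i t else 0) := by
      intro t
      by_cases h : t = x
      · subst h; simp [hij]
      · rw [if_pos (Or.inl ⟨rfl, fun hh => h (Subtype.ext hh)⟩), if_neg h]
    rw [Finset.sum_congr rfl fun t _ => h3 t, Finset.sum_ite_eq' Finset.univ x (fun t => μU i t)]
    simp
  have hSj : (∑ t : {t : ℝ // t ∈ C j}, if (j = i ∧ ((t : ℝ) ≠ (x : ℝ))) ∨ (j = j ∧ ((t : ℝ) ≠ (y : ℝ)))
      then 0 else μU j t) = μU j y := by
    have h3 : ∀ t : {t : ℝ // t ∈ C j}, (if (j = i ∧ ((t : ℝ) ≠ (x : ℝ))) ∨ (j = j ∧ ((t : ℝ) ≠ (y : ℝ)))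
        then 0 else μU j t) = (if t = y then μU j t else 0) := by
      intro t
      by_cases h : t = y
      · subst h; simp [Ne.symm hij]
      · rw [if_pos (Or.inr ⟨rfl, fun hh => h (Subtype.ext hh)⟩), if_neg h]
    rw [Finset.sum_congr rfl fun t _ => h3 t, Finset.sum_ite_eq' Finset.univ y (fun t => μU j t)]
    simp
  have hrest : ∏ k ∈ (Finset.univ.erase i).erase j,
      (∑ t : {t : ℝ // t ∈ C k}, if (k = i ∧ ((t : ℝ) ≠ (x : ℝ))) ∨ (k = j ∧ ((t : ℝ) ≠ (y : ℝ)))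
        then 0 else μU k t) = 1 := by
    refine Finset.prod_eq_one fun k hk => ?_
    obtain ⟨hkj, hk'⟩ := Finset.mem_erase.mp hk
    obtain ⟨hki, _⟩ := Finset.mem_erase.mp hk'
    have h4 : ∀ t : {t : ℝ // t ∈ C k}, (if (k = i ∧ ((t : ℝ) ≠ (x : ℝ))) ∨ (k = j ∧ ((t : ℝ) ≠ (y : ℝ)))
        then 0 else μU k t) = μU k t := by
      intro t
      exact if_neg (by rintro (⟨rfl, _⟩ | ⟨rfl, _⟩) <;> simp_all)
    rw [Finset.sum_congr rfl fun t _ => h4 t]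
    exact (hμU k).2
  rw [hSi, hSj, hrest, mul_one]


lemma key_sum {Et : Finset (Fin n × Fin n)} (hpos : ∀ i x, 0 < μU i x)
    (hcons1 : ∀ a b, (a, b) ∈ Et → ∀ x : {x : ℝ // x ∈ C a},
      ∑ y : {y : ℝ // y ∈ C b}, θB a b (x, y) = μU a x)
    (hcons2 : ∀ a b, (a, b) ∈ Et → ∀ y : {y : ℝ // y ∈ C b},
      ∑ x : {x : ℝ // x ∈ C a}, θB a b (x, y) = μU b y)
    {e0 : Fin n × Fin n} (he0 : e0 ∈ Et) (hlt : e0.1 ≠ e0.2)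
    {v : Fin n} (hv : e0.1 = v ∨ e0.2 = v) (c : Pt C) :
    ∑ x : {x : ℝ // x ∈ C v}, μU v x * wt μU θB e0 (Function.update c v x) = 1 := by
  classical
  obtain ⟨a, b⟩ := e0
  simp only at hlt
  rcases hv with hv | hv
  · simp only at hv; subst hv
    have hupd : ∀ x : {x : ℝ // x ∈ C a}, wt μU θB (a, b) (Function.update c a x)
        = θB a b (x, c b) / (μU a x * μU b (c b)) := by
      intro x
      simp only [wt, Function.update_self, Function.update_of_ne (Ne.symm hlt)]
    have hterm : ∀ x : {x : ℝ // x ∈ C a},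
        μU a x * wt μU θB (a, b) (Function.update c a x) = θB a b (x, c b) / μU b (c b) := by
      intro x
      rw [hupd x, mul_div_assoc', mul_div_mul_left _ _ (hpos a x).ne']
    rw [Finset.sum_congr rfl fun x _ => hterm x, ← Finset.sum_div,
      hcons2 a b he0 (c b), div_self (hpos b (c b)).ne']
  · simp only at hv; subst hv
    have hupd : ∀ x : {x : ℝ // x ∈ C b}, wt μU θB (a, b) (Function.update c b x)
        = θB a b (c a, x) / (μU a (c a) * μU b x) := by
      intro x
      simp only [wt, Function.update_self, Function.update_of_ne hlt]
    have hterm : ∀ x : {x : ℝ // x ∈ C b},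
        μU b x * wt μU θB (a, b) (Function.update c b x) = θB a b (c a, x) / μU a (c a) := by
      intro x
      rw [hupd x, mul_comm (μU a (c a)) (μU b x), mul_div_assoc',
        mul_div_mul_left _ _ (hpos b x).ne']
    rw [Finset.sum_congr rfl fun x _ => hterm x, ← Finset.sum_div,
      hcons1 a b he0 (c a), div_self (hpos a (c a)).ne']

lemma step (hC : ∀ i, (C i).Nonempty)
    {F : Finset (Fin n × Fin n)}
    {v : Fin n} {e0 : Fin n × Fin n} (he0 : e0 ∈ F)
    (huniq : ∀ e ∈ F, (e.1 = v ∨ e.2 = v) → e = e0)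
    (hkey : ∀ c : Pt C,
      (∑ x : {x : ℝ // x ∈ C v}, μU v x * wt μU θB e0 (Function.update c v x)) = 1)
    (hμ1 : ∑ x : {x : ℝ // x ∈ C v}, μU v x = 1)
    (A : Pt C → ℝ)
    (hA : ∀ (c : Pt C) (x : {x : ℝ // x ∈ C v}), A (Function.update c v x) = A c) :
    ∑ c : Pt C, A c * GF μU θB F c = ∑ c : Pt C, A c * GF μU θB (F.erase e0) c := by
  classical
  set Eqv := Equiv.piSplitAt v (fun i : Fin n => {x : ℝ // x ∈ C i}) with hEqv
  have htrans : ∀ f : Pt C → ℝ, ∑ c : Pt C, f c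
      = ∑ d : (∀ j : {j : Fin n // j ≠ v}, {x : ℝ // x ∈ C j.1}),
          ∑ x : {x : ℝ // x ∈ C v}, f (Eqv.symm (x, d)) := by
    intro f
    rw [← Equiv.sum_comp Eqv.symm f, Fintype.sum_prod_type]
    exact Finset.sum_comm
  rw [htrans, htrans]
  refine Finset.sum_congr rfl fun d _ => ?_
  obtain ⟨x0v, hx0v⟩ := hC v
  set cd : Pt C := Eqv.symm (⟨x0v, hx0v⟩, d) with hcd
  have hsv : ∀ x : {x : ℝ // x ∈ C v}, Eqv.symm (x, d) = Function.update cd v x := by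
    intro x
    funext j
    rcases eq_or_ne j v with rfl | hj
    · simp [hcd, hEqv, Equiv.piSplitAt_symm_apply]
    · simp [hcd, hEqv, Equiv.piSplitAt_symm_apply, hj, Function.update_of_ne hj]
  have hne0v : ∀ e ∈ F.erase e0, e.1 ≠ v ∧ e.2 ≠ v := by
    intro e he
    obtain ⟨hne, heF⟩ := Finset.mem_erase.mp he
    exact ⟨fun h => hne (huniq e heF (Or.inl h)), fun h => hne (huniq e heF (Or.inr h))⟩
  have hwt_upd : ∀ (x : {x : ℝ // x ∈ C v}) e, e ∈ F.erase e0 →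
      wt μU θB e (Function.update cd v x) = wt μU θB e cd := by
    intro x e he
    obtain ⟨h1, h2⟩ := hne0v e he
    simp only [wt, Function.update_of_ne h1, Function.update_of_ne h2]
  set R : ℝ := (∏ k ∈ Finset.univ.erase v, μU k (cd k)) * ∏ e ∈ F.erase e0, wt μU θB e cd
    with hR
  have hGF : ∀ x : {x : ℝ // x ∈ C v}, GF μU θB F (Function.update cd v x)
      = (μU v x * wt μU θB e0 (Function.update cd v x)) * R := by
    intro x
    rw [GF, ← Finset.mul_prod_erase Finset.univ _ (Finset.mem_univ v),
      ← Finset.mul_prod_erase F _ he0]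
    rw [Function.update_self]
    rw [Finset.prod_congr rfl fun k hk =>
      (by rw [Function.update_of_ne (Finset.mem_erase.mp hk).1] :
        μU k (Function.update cd v x k) = μU k (cd k))]
    rw [Finset.prod_congr rfl fun e he => hwt_upd x e he]
    rw [hR]; ring
  have hGF' : ∀ x : {x : ℝ // x ∈ C v}, GF μU θB (F.erase e0) (Function.update cd v x)
      = μU v x * R := by
    intro x
    rw [GF, ← Finset.mul_prod_erase Finset.univ _ (Finset.mem_univ v)]
    rw [Function.update_self]
    rw [Finset.prod_congr rfl fun k hk =>
      (by rw [Function.update_of_ne (Finset.mem_erase.mp hk).1] :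
        μU k (Function.update cd v x k) = μU k (cd k))]
    rw [Finset.prod_congr rfl fun e he => hwt_upd x e he]
    rw [hR]; ring
  have hL : ∑ x : {x : ℝ // x ∈ C v}, A (Eqv.symm (x, d)) * GF μU θB F (Eqv.symm (x, d))
      = (A cd * R) * ∑ x : {x : ℝ // x ∈ C v},
          μU v x * wt μU θB e0 (Function.update cd v x) := by
    rw [Finset.mul_sum]
    refine Finset.sum_congr rfl fun x _ => ?_
    rw [hsv x, hA cd x, hGF x]; ring
  have hRR : ∑ x : {x : ℝ // x ∈ C v}, A (Eqv.symm (x, d)) * GF μU θB (F.erase e0) (Eqv.symm (x, d))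
      = (A cd * R) * ∑ x : {x : ℝ // x ∈ C v}, μU v x := by
    rw [Finset.mul_sum]
    refine Finset.sum_congr rfl fun x _ => ?_
    rw [hsv x, hA cd x, hGF' x]; ring
  rw [hL, hRR, hkey cd, hμ1]


lemma S1 {Et : Finset (Fin n × Fin n)} (hsorted : ∀ e ∈ Et, e.1 < e.2)
    (hC : ∀ i, (C i).Nonempty) (hμU : ∀ i, IsPmf (μU i)) (hpos : ∀ i x, 0 < μU i x)
    (hcons1 : ∀ a b, (a, b) ∈ Et → ∀ x : {x : ℝ // x ∈ C a},
      ∑ y : {y : ℝ // y ∈ C b}, θB a b (x, y) = μU a x)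
    (hcons2 : ∀ a b, (a, b) ∈ Et → ∀ y : {y : ℝ // y ∈ C b},
      ∑ x : {x : ℝ // x ∈ C a}, θB a b (x, y) = μU b y) :
    ∀ F : Finset (Fin n × Fin n), F ⊆ Et → (treeGraph F).IsAcyclic →
    ∀ (i : Fin n) (x : {x : ℝ // x ∈ C i}),
      ∑ c : Pt C, (if c i = x then GF μU θB F c else 0) = μU i x := by
  classical
  intro F
  induction F using Finset.strongInduction with
  | _ F ih =>
    intro hFE hac i x
    rcases Finset.eq_empty_or_nonempty F with rfl | hne
    · simp only [GF, Finset.prod_empty, mul_one]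
      exact B1 μU hμU i x
    · obtain ⟨v, e0, he0, hv, hvi, huniq⟩ :=
        exists_leaf_avoid (fun e he => hsorted e (hFE he)) hac hne i
      have hkey := key_sum μU θB hpos hcons1 hcons2 (hFE he0) (hsorted e0 (hFE he0)).ne hv
      have hmuleq : ∀ (Fs : Finset (Fin n × Fin n)) (c : Pt C),
          (if c i = x then GF μU θB Fs c else 0)
            = (if c i = x then (1 : ℝ) else 0) * GF μU θB Fs c := by
        intro Fs c; split <;> simp
      have hstep := step μU θB hC he0 huniq hkey (hμU v).2
        (fun c => if c i = x then (1 : ℝ) else 0)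
        (fun c x' => by simp only [Function.update_of_ne (Ne.symm hvi)])
      rw [Finset.sum_congr rfl fun c _ => hmuleq F c, hstep,
        ← Finset.sum_congr rfl fun c _ => hmuleq (F.erase e0) c]
      exact ih (F.erase e0) (Finset.erase_ssubset he0)
        ((F.erase_subset e0).trans hFE) (acyclic_anti (F.erase_subset e0) hac) i x

lemma S2 {Et : Finset (Fin n × Fin n)} (hsorted : ∀ e ∈ Et, e.1 < e.2)
    (hC : ∀ i, (C i).Nonempty) (hμU : ∀ i, IsPmf (μU i)) (hpos : ∀ i x, 0 < μU i x)
    (hcons1 : ∀ a b, (a, b) ∈ Et → ∀ x : {x : ℝ // x ∈ C a},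
      ∑ y : {y : ℝ // y ∈ C b}, θB a b (x, y) = μU a x)
    (hcons2 : ∀ a b, (a, b) ∈ Et → ∀ y : {y : ℝ // y ∈ C b},
      ∑ x : {x : ℝ // x ∈ C a}, θB a b (x, y) = μU b y)
    {i j : Fin n} (hij : i < j) (x : {t : ℝ // t ∈ C i}) (y : {t : ℝ // t ∈ C j}) :
    ∀ F : Finset (Fin n × Fin n), F ⊆ Et → (i, j) ∉ F →
      (treeGraph (insert (i, j) F)).IsAcyclic →
      ∑ c : Pt C, (if c i = x ∧ c j = y then GF μU θB F c else 0) = μU i x * μU j y := by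
  classical
  intro F
  induction F using Finset.strongInduction with
  | _ F ih =>
    intro hFE hnotin hac
    rcases Finset.eq_empty_or_nonempty F with rfl | hne
    · simp only [GF, Finset.prod_empty, mul_one]
      exact B2 μU hμU hij.ne x y
    · obtain ⟨v, e0, he0, hv, hvi, hvj, huniq⟩ :=
        exists_leaf_avoid2 (fun e he => hsorted e (hFE he)) hij hnotin hac hne
      have hkey := key_sum μU θB hpos hcons1 hcons2 (hFE he0) (hsorted e0 (hFE he0)).ne hv
      have hmuleq : ∀ (Fs : Finset (Fin n × Fin n)) (c : Pt C),
          (if c i = x ∧ c j = y then GF μU θB Fs c else 0)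
            = (if c i = x ∧ c j = y then (1 : ℝ) else 0) * GF μU θB Fs c := by
        intro Fs c; split <;> simp
      have hstep := step μU θB hC he0 huniq hkey (hμU v).2
        (fun c => if c i = x ∧ c j = y then (1 : ℝ) else 0)
        (fun c x' => by
          simp only [Function.update_of_ne (Ne.symm hvi), Function.update_of_ne (Ne.symm hvj)])
      rw [Finset.sum_congr rfl fun c _ => hmuleq F c, hstep,
        ← Finset.sum_congr rfl fun c _ => hmuleq (F.erase e0) c]
      refine ih (F.erase e0) (Finset.erase_ssubset he0)
        ((F.erase_subset e0).trans hFE)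
        (fun h => hnotin (Finset.mem_of_mem_erase h))
        (acyclic_anti (Finset.insert_subset_insert _ (F.erase_subset e0)) hac)

end CLaux

/-- Chow–Liu tree construction: on a tree, given strictly positive univariate pmfs and
consistent bivariate pmfs on the edges, the conditionally independent tree product
distribution is a joint distribution with the prescribed univariate and bivariate
marginals. -/
theorem stmt3
    (n : ℕ) (hn : 1 ≤ n) (C : Fin n → Finset ℝ) (hC : ∀ i, (C i).Nonempty)
    (E : Finset (Fin n × Fin n)) (hE : IsTreeEdges E)
    (μU : (i : Fin n) → {x : ℝ // x ∈ C i} → ℝ) (hμU : ∀ i, IsPmf (μU i))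
    (hpos : ∀ i, ∀ x, 0 < μU i x)
    (θB : (i j : Fin n) → ({x : ℝ // x ∈ C i} × {y : ℝ // y ∈ C j}) → ℝ)
    (hθB : ∀ i j, (i, j) ∈ E → IsPmf (θB i j))
    (hcons1 : ∀ i j, (i, j) ∈ E → ∀ x : {x : ℝ // x ∈ C i},
      ∑ y : {y : ℝ // y ∈ C j}, θB i j (x, y) = μU i x)
    (hcons2 : ∀ i j, (i, j) ∈ E → ∀ y : {y : ℝ // y ∈ C j},
      ∑ x : {x : ℝ // x ∈ C i}, θB i j (x, y) = μU j y)
    (θ : Pt C → ℝ)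
    (hθ : ∀ c : Pt C, θ c = (∏ i, μU i (c i)) *
      ∏ e ∈ E, θB e.1 e.2 (c e.1, c e.2) / (μU e.1 (c e.1) * μU e.2 (c e.2))) :
    IsJoint θ ∧ (∀ i, projUni θ i = μU i) ∧
    (∀ i j, (i, j) ∈ E → projBi θ i j = θB i j) := by
  classical
  have hsorted := hE.1
  have hac : (treeGraph E).IsAcyclic := hE.2.IsAcyclic
  have hθG : ∀ c, θ c = CLaux.GF μU θB E c := by
    intro c; rw [hθ c]; simp only [CLaux.GF, CLaux.wt]
  have hUni' : ∀ (i : Fin n) (x : {x : ℝ // x ∈ C i}),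
      ∑ c : Pt C, (if c i = x then θ c else 0) = μU i x := by
    intro i x
    rw [Finset.sum_congr rfl fun c _ => by rw [hθG c]]
    exact CLaux.S1 μU θB hsorted hC hμU hpos hcons1 hcons2 E Finset.Subset.rfl hac i x
  have hUni : ∀ i, projUni θ i = μU i := by
    intro i; funext x; exact hUni' i x
  have hnn : ∀ c, 0 ≤ θ c := by
    intro c; rw [hθ c]
    apply mul_nonneg
    · exact Finset.prod_nonneg fun k _ => (hpos k (c k)).le
    · refine Finset.prod_nonneg fun e he => ?_
      have hp : (e.1, e.2) ∈ E := by rwa [Prod.mk.eta]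
      exact div_nonneg ((hθB e.1 e.2 hp).1 _)
        (mul_nonneg (hpos _ _).le (hpos _ _).le)
  have hsum : ∑ c : Pt C, θ c = 1 := by
    set i0 : Fin n := ⟨0, hn⟩ with hi0
    have h1 : ∀ c : Pt C, θ c
        = ∑ x : {x : ℝ // x ∈ C i0}, if c i0 = x then θ c else 0 := by
      intro c
      rw [Finset.sum_ite_eq Finset.univ (c i0) (fun _ => θ c)]
      simp
    rw [Finset.sum_congr rfl fun c _ => h1 c, Finset.sum_comm]
    rw [Finset.sum_congr rfl fun x _ => hUni' i0 x]
    exact (hμU i0).2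
  have hBi : ∀ i j, (i, j) ∈ E → projBi θ i j = θB i j := by
    intro i j hijE
    funext p; obtain ⟨x, y⟩ := p
    have hij : i < j := hsorted _ hijE
    have hsplit : ∀ c : Pt C,
        θ c = CLaux.wt μU θB (i, j) c * CLaux.GF μU θB (E.erase (i, j)) c := by
      intro c
      rw [hθG c, CLaux.GF, CLaux.GF, ← Finset.mul_prod_erase E _ hijE]; ring
    have hterm : ∀ c : Pt C, (if c i = x ∧ c j = y then θ c else 0)
        = (θB i j (x, y) / (μU i x * μU j y)) *
          (if c i = x ∧ c j = y then CLaux.GF μU θB (E.erase (i, j)) c else 0) := by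
      intro c
      by_cases h : c i = x ∧ c j = y
      · rw [if_pos h, if_pos h, hsplit c]
        simp only [CLaux.wt]
        rw [h.1, h.2]
      · rw [if_neg h, if_neg h, mul_zero]
    show (∑ c : Pt C, if c i = x ∧ c j = y then θ c else 0) = θB i j (x, y)
    rw [Finset.sum_congr rfl fun c _ => hterm c, ← Finset.mul_sum]
    rw [CLaux.S2 μU θB hsorted hC hμU hpos hcons1 hcons2 hij x y (E.erase (i, j))
      (E.erase_subset _) (Finset.notMem_erase _ _)
      (by rwa [Finset.insert_erase hijE])]
    rw [div_mul_cancel₀ _ (mul_pos (hpos i x) (hpos j y)).ne']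
  exact ⟨⟨hnn, hsum⟩, hUni, hBi⟩
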